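/- arXiv:2311.13589 — 2 statements merged into one kernel-verified Lean document; each statement's English description precedes it below -/
import Mathlib

section
/- Let f : [0,1] → ℝ be a probability density that is λ-Lipschitz and bounded by η, let V : ℝ → ℝ be bounded by M ≥ 0, and let 0 ≤ y ≤ y' with y' − y ≤ 1. Then |∫₀¹ V(y + r) f(r) dr − ∫₀¹ V(y' + r) f(r) dr| ≤ M(λ + 2η)(y' − y), provided additionally that V is such that the shifted integrals are well-defined (V defined on [y, y'+1]). -/
open MeasureTheory intervalIntegral

theorem shifted_integral_lipschitz (f V : ℝ → ℝ) (lam eta M y y' : ℝ)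
    (hf_meas : Measurable f) (hV_meas : Measurable V)
    (hf_nn : ∀ r ∈ Set.Icc (0:ℝ) 1, 0 ≤ f r)
    (hf_density : ∫ r in (0:ℝ)..1, f r = 1)
    (hf_lip : ∀ r ∈ Set.Icc (0:ℝ) 1, ∀ r' ∈ Set.Icc (0:ℝ) 1, |f r - f r'| ≤ lam * |r - r'|)
    (hf_bd : ∀ r ∈ Set.Icc (0:ℝ) 1, f r ≤ eta)
    (hM : 0 ≤ M)
    (hV_bd : ∀ x ∈ Set.Icc y (y' + 1), |V x| ≤ M)
    (hy : 0 ≤ y) (hyy' : y ≤ y') (hdiff : y' - y ≤ 1) :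
    |(∫ r in (0:ℝ)..1, V (y + r) * f r) - ∫ r in (0:ℝ)..1, V (y' + r) * f r| ≤
      M * (lam + 2 * eta) * (y' - y) := by
  set δ := y' - y with hδdef
  have hδ0 : 0 ≤ δ := by linarith
  have hδ1 : δ ≤ 1 := hdiff
  have hlam0 : 0 ≤ lam := by
    have h := hf_lip 0 (by norm_num) 1 (by norm_num)
    have := abs_nonneg (f 0 - f 1)
    simp only [zero_sub, abs_neg, abs_one, mul_one] at h
    linarith
  have heta0 : 0 ≤ eta := le_trans (hf_nn 0 (by norm_num)) (hf_bd 0 (by norm_num))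
  -- boundedness helper producing interval integrability on subintervals of [0,1]
  have hbound : ∀ W : ℝ → ℝ, Measurable W → (∀ x ∈ Set.Icc y (y'+1), |W x| ≤ M) →
      ∀ c : ℝ, y ≤ y + c → y + c + 1 ≤ y' + 1 → ∀ a b : ℝ, 0 ≤ a → a ≤ b → b ≤ 1 →
      IntervalIntegrable (fun r => W (y + c + r) * f r) volume a b := by
    intro W hWm hWb c hc1 hc2 a b ha hab hb1
    rw [intervalIntegrable_iff_integrableOn_Ioc_of_le hab]
    apply Measure.integrableOn_of_bounded (M := M * eta) measure_Ioc_lt_top.ne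
    · exact ((hWm.comp (measurable_const_add _)).mul hf_meas).aestronglyMeasurable
    · filter_upwards [ae_restrict_mem measurableSet_Ioc] with x hx
      have hx1 : 0 ≤ x := le_of_lt (by exact lt_of_le_of_lt ha hx.1)
      have hx2 : x ≤ 1 := le_trans hx.2 hb1
      have hfx := hf_bd x ⟨hx1, hx2⟩
      have hfnn := hf_nn x ⟨hx1, hx2⟩
      have hWx : |W (y + c + x)| ≤ M := hWb _ ⟨by linarith, by linarith⟩
      calc ‖W (y + c + x) * f x‖ = |W (y + c + x)| * |f x| := abs_mul _ _
        _ ≤ M * eta := by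
            apply mul_le_mul hWx _ (abs_nonneg _) hM
            rwa [abs_of_nonneg hfnn]
  have hg01 : IntervalIntegrable (fun r => V (y + r) * f r) volume 0 1 := by
    simpa using hbound V hV_meas hV_bd 0 (by linarith) (by linarith) 0 1 le_rfl (by norm_num) le_rfl
  have hg0δ : IntervalIntegrable (fun r => V (y + r) * f r) volume 0 δ := by
    simpa using hbound V hV_meas hV_bd 0 (by linarith) (by linarith) 0 δ le_rfl hδ0 hδ1
  have hgδ1 : IntervalIntegrable (fun r => V (y + r) * f r) volume δ 1 := by
    simpa using hbound V hV_meas hV_bd 0 (by linarith) (by linarith) δ 1 hδ0 hδ1 le_rfl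
  have hh0 : IntervalIntegrable (fun r => V (y' + r) * f r) volume 0 (1 - δ) := by
    have := hbound V hV_meas hV_bd δ (by linarith) (by linarith) 0 (1-δ) le_rfl (by linarith) (by linarith)
    simpa [hδdef, show y + (y' - y) = y' by ring] using this
  have hh1 : IntervalIntegrable (fun r => V (y' + r) * f r) volume (1-δ) 1 := by
    have := hbound V hV_meas hV_bd δ (by linarith) (by linarith) (1-δ) 1 (by linarith) (by linarith) le_rfl
    simpa [hδdef, show y + (y' - y) = y' by ring] using this
  -- shifted integrand integrable: V(y'+s) * f(s+δ) on [0,1-δ]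
  have hshift_int : IntervalIntegrable (fun s => V (y' + s) * f (s + δ)) volume 0 (1-δ) := by
    have h := hgδ1
    -- integrability of comp: use IntervalIntegrable.comp_add_right
    have h2 := h.comp_add_right δ
    have : IntervalIntegrable (fun s => V (y + (s + δ)) * f (s + δ)) volume (δ - δ) (1 - δ) := h2
    simpa [show δ - δ = (0:ℝ) by ring, show ∀ s:ℝ, y + (s + δ) = y' + s from fun s => by rw [hδdef]; ring] using this
  -- key change of variables
  have hshift : (∫ r in δ..(1:ℝ), V (y + r) * f r) = ∫ s in (0:ℝ)..(1-δ), V (y' + s) * f (s + δ) := by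
    have h := intervalIntegral.integral_comp_add_right (a := (0:ℝ)) (b := 1 - δ) (fun r => V (y + r) * f r) δ
    rw [show (0:ℝ) + δ = δ by ring, show 1 - δ + δ = (1:ℝ) by ring] at h
    rw [← h]
    congr 1 with s
    rw [hδdef]; ring_nf
  -- splits
  have splitg : (∫ r in (0:ℝ)..1, V (y + r) * f r)
      = (∫ r in (0:ℝ)..δ, V (y + r) * f r) + ∫ r in δ..(1:ℝ), V (y + r) * f r :=
    (integral_add_adjacent_intervals hg0δ hgδ1).symm
  have splith : (∫ r in (0:ℝ)..1, V (y' + r) * f r)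
      = (∫ r in (0:ℝ)..(1-δ), V (y' + r) * f r) + ∫ r in (1-δ)..(1:ℝ), V (y' + r) * f r :=
    (integral_add_adjacent_intervals hh0 hh1).symm
  have hmid : (∫ s in (0:ℝ)..(1-δ), V (y' + s) * f (s + δ)) - (∫ s in (0:ℝ)..(1-δ), V (y' + s) * f s)
      = ∫ s in (0:ℝ)..(1-δ), V (y' + s) * (f (s + δ) - f s) := by
    rw [← intervalIntegral.integral_sub hshift_int hh0]
    congr 1 with s; ring
  -- bounds
  have b1 : |∫ r in (0:ℝ)..δ, V (y + r) * f r| ≤ M * eta * δ := by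
    have := intervalIntegral.norm_integral_le_of_norm_le_const (C := M * eta)
      (f := fun r => V (y + r) * f r) (a := 0) (b := δ) ?_
    · simpa [abs_of_nonneg hδ0] using this
    · intro x hx
      rw [Set.uIoc_of_le hδ0] at hx
      have hx1 : 0 ≤ x := hx.1.le
      have hx2 : x ≤ 1 := le_trans hx.2 hδ1
      have : |V (y + x)| ≤ M := hV_bd _ ⟨by linarith, by linarith⟩
      calc ‖V (y + x) * f x‖ = |V (y + x)| * |f x| := abs_mul _ _
        _ ≤ M * eta := mul_le_mul this (by rw [abs_of_nonneg (hf_nn x ⟨hx1, hx2⟩)]; exact hf_bd x ⟨hx1, hx2⟩) (abs_nonneg _) hM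
  have b3 : |∫ r in (1-δ)..(1:ℝ), V (y' + r) * f r| ≤ M * eta * δ := by
    have := intervalIntegral.norm_integral_le_of_norm_le_const (C := M * eta)
      (f := fun r => V (y' + r) * f r) (a := 1-δ) (b := 1) ?_
    · have h1 : |(1:ℝ) - (1 - δ)| = δ := by rw [show (1:ℝ) - (1-δ) = δ by ring, abs_of_nonneg hδ0]
      rw [h1] at this; exact this
    · intro x hx
      rw [Set.uIoc_of_le (by linarith)] at hx
      have hx1 : 0 ≤ x := le_trans (by linarith) hx.1.le
      have hx2 : x ≤ 1 := hx.2
      have hxlow : y ≤ y' + x := by linarith [hx.1.le]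
      have : |V (y' + x)| ≤ M := hV_bd _ ⟨by linarith [hx.1], by linarith⟩
      calc ‖V (y' + x) * f x‖ = |V (y' + x)| * |f x| := abs_mul _ _
        _ ≤ M * eta := mul_le_mul this (by rw [abs_of_nonneg (hf_nn x ⟨hx1, hx2⟩)]; exact hf_bd x ⟨hx1, hx2⟩) (abs_nonneg _) hM
  have b2 : |∫ s in (0:ℝ)..(1-δ), V (y' + s) * (f (s + δ) - f s)| ≤ M * (lam * δ) * (1 - δ) := by
    have := intervalIntegral.norm_integral_le_of_norm_le_const (C := M * (lam * δ))
      (f := fun s => V (y' + s) * (f (s + δ) - f s)) (a := 0) (b := 1-δ) ?_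
    · rw [show |(1:ℝ) - δ - 0| = 1 - δ by rw [sub_zero, abs_of_nonneg (by linarith)]] at this
      exact this
    · intro x hx
      rw [Set.uIoc_of_le (by linarith)] at hx
      have hx1 : 0 ≤ x := hx.1.le
      have hx2 : x ≤ 1 - δ := hx.2
      have hVb : |V (y' + x)| ≤ M := hV_bd _ ⟨by linarith, by linarith⟩
      have hlip := hf_lip (x + δ) ⟨by linarith, by linarith⟩ x ⟨hx1, by linarith⟩
      rw [show x + δ - x = δ by ring, abs_of_nonneg hδ0] at hlip
      calc ‖V (y' + x) * (f (x + δ) - f x)‖ = |V (y' + x)| * |f (x + δ) - f x| := abs_mul _ _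
        _ ≤ M * (lam * δ) := mul_le_mul hVb hlip (abs_nonneg _) hM
  -- assemble
  have key : (∫ r in (0:ℝ)..1, V (y + r) * f r) - (∫ r in (0:ℝ)..1, V (y' + r) * f r)
      = (∫ r in (0:ℝ)..δ, V (y + r) * f r)
        + (∫ s in (0:ℝ)..(1-δ), V (y' + s) * (f (s + δ) - f s))
        - ∫ r in (1-δ)..(1:ℝ), V (y' + r) * f r := by
    rw [splitg, splith, hshift, ← hmid]; ring
  rw [key]
  have habs : |(∫ r in (0:ℝ)..δ, V (y + r) * f r)
        + (∫ s in (0:ℝ)..(1-δ), V (y' + s) * (f (s + δ) - f s))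
        - ∫ r in (1-δ)..(1:ℝ), V (y' + r) * f r|
      ≤ M * eta * δ + M * (lam * δ) * (1 - δ) + M * eta * δ := by
    calc _ ≤ |(∫ r in (0:ℝ)..δ, V (y + r) * f r)
        + (∫ s in (0:ℝ)..(1-δ), V (y' + s) * (f (s + δ) - f s))|
        + |∫ r in (1-δ)..(1:ℝ), V (y' + r) * f r| := abs_sub _ _
      _ ≤ |(∫ r in (0:ℝ)..δ, V (y + r) * f r)|
        + |(∫ s in (0:ℝ)..(1-δ), V (y' + s) * (f (s + δ) - f s))|
        + |∫ r in (1-δ)..(1:ℝ), V (y' + r) * f r| := by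
          gcongr; exact abs_add_le _ _
      _ ≤ M * eta * δ + M * (lam * δ) * (1 - δ) + M * eta * δ := by
          gcongr <;> simp [b1, b2, b3]
  refine le_trans habs ?_
  nlinarith [mul_nonneg (mul_nonneg hM hlam0) hδ0, mul_nonneg (mul_nonneg (mul_nonneg hM hlam0) hδ0) hδ0]
end

section
/- Let U : [0,H] → ℝ be continuous and strictly increasing with U(0) = 0, and consider a finite-horizon MDP on finite state and action spaces with rewards in [0,1]. Define value functions on the enlarged state space (s,y) by the backward recursion V_{H+1}(s,y) = U(y) and V_h(s,y) = max_{a} E_{s'∼P_h(·|s,a), r∼R_h(·|s,a)}[V_{h+1}(s', y + r)]. Then V_1(s,0) equals the supremum over all history-dependent policies ψ of E^ψ[U(Σ_{h=1}^H r_h) | s_1 = s], and the greedy Markovian policy on the enlarged state space attains it. -/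
open MeasureTheory

/-- Expected utility of following history-dependent policy `ψ` for `n` remaining steps,
given the past trajectory `g` (a list of (state, action, reward) triples) and current
state `s`.  The timestamp is `g.length + 1`. At the end the utility `U` of the total
accumulated reward is collected. -/
noncomputable def histValue {S A : Type*} [Fintype S]
    (P : ℕ → S → A → S → ℝ) (R : ℕ → S → A → Measure ℝ) (U : ℝ → ℝ)
    (ψ : List (S × A × ℝ) → S → A) : ℕ → List (S × A × ℝ) → S → ℝ
  | 0, g, _ => U ((g.map (fun t => t.2.2)).sum)
  | n + 1, g, s =>
      ∑ s' : S, P (g.length + 1) s (ψ g s) s' *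
        ∫ r, histValue P R U ψ n (g ++ [(s, ψ g s, r)]) s' ∂(R (g.length + 1) s (ψ g s))

/-- `U` clamped to the interval `[0, H]`. -/
noncomputable def clampU (U : ℝ → ℝ) (H : ℕ) : ℝ → ℝ :=
  fun y => U (max 0 (min y (H : ℝ)))

/-- Value function indexed by the number of remaining steps (`Wrev n` is the value with
`n` steps to go, i.e. at time `H + 1 - n`). -/
noncomputable def Wrev {S A : Type*} [Fintype S] [Fintype A] [Nonempty A]
    (P : ℕ → S → A → S → ℝ) (R : ℕ → S → A → Measure ℝ)
    (H : ℕ) (G : ℝ → ℝ) : ℕ → S → ℝ → ℝ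
  | 0, _, y => G y
  | n + 1, s, y => Finset.univ.sup' Finset.univ_nonempty
      (fun a : A => ∑ s' : S, P (H - n) s a s' *
        ∫ r, Wrev P R H G n s' (y + r) ∂(R (H - n) s a))

/-- The `Q`-function used by the greedy policy. -/
noncomputable def Qfun {S A : Type*} [Fintype S] [Fintype A] [Nonempty A]
    (P : ℕ → S → A → S → ℝ) (R : ℕ → S → A → Measure ℝ)
    (H : ℕ) (G : ℝ → ℝ) (g : List (S × A × ℝ)) (s : S) (a : A) : ℝ :=
  ∑ s' : S, P (g.length + 1) s a s' *
    ∫ r, Wrev P R H G (H - (g.length + 1)) s' ((g.map (fun t => t.2.2)).sum + r)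
      ∂(R (g.length + 1) s a)

/-- The greedy (Markovian on the enlarged state space) policy. -/
noncomputable def greedy {S A : Type*} [Fintype S] [Fintype A] [Nonempty A]
    (P : ℕ → S → A → S → ℝ) (R : ℕ → S → A → Measure ℝ)
    (H : ℕ) (G : ℝ → ℝ) : List (S × A × ℝ) → S → A :=
  fun g s =>
    (Finset.univ.exists_mem_eq_sup' Finset.univ_nonempty (Qfun P R H G g s)).choose

theorem greedy_spec {S A : Type*} [Fintype S] [Fintype A] [Nonempty A]
    (P : ℕ → S → A → S → ℝ) (R : ℕ → S → A → Measure ℝ)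
    (H : ℕ) (G : ℝ → ℝ) (g : List (S × A × ℝ)) (s : S) :
    Finset.univ.sup' Finset.univ_nonempty (Qfun P R H G g s)
      = Qfun P R H G g s (greedy P R H G g s) :=
  (Finset.univ.exists_mem_eq_sup' Finset.univ_nonempty (Qfun P R H G g s)).choose_spec.2

/-- Continuity, nonnegativity and boundedness of `Wrev`. -/
theorem Wrev_prop {S A : Type*} [Fintype S] [Fintype A] [Nonempty A]
    (P : ℕ → S → A → S → ℝ)
    (hPnn : ∀ h s a s', 0 ≤ P h s a s') (hPsum : ∀ h s a, ∑ s' : S, P h s a s' = 1)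
    (R : ℕ → S → A → Measure ℝ) (hR : ∀ h s a, IsProbabilityMeasure (R h s a))
    (H : ℕ) (G : ℝ → ℝ) (C : ℝ)
    (hGcont : Continuous G) (hG0 : ∀ y, 0 ≤ G y) (hGC : ∀ y, G y ≤ C) :
    ∀ n : ℕ, (∀ s : S, Continuous (fun y => Wrev P R H G n s y)) ∧
      (∀ (s : S) (y : ℝ), 0 ≤ Wrev P R H G n s y) ∧
      (∀ (s : S) (y : ℝ), Wrev P R H G n s y ≤ C) := by
  have hC0 : (0 : ℝ) ≤ C := le_trans (hG0 0) (hGC 0)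
  intro n
  induction n with
  | zero => exact ⟨fun s => hGcont, fun s y => hG0 y, fun s y => hGC y⟩
  | succ n ih =>
    obtain ⟨ihc, ih0, ihC⟩ := ih
    -- facts about the inner integrals
    have hint : ∀ (s' : S) (y : ℝ) (h : ℕ) (s : S) (a : A),
        Integrable (fun r => Wrev P R H G n s' (y + r)) (R h s a) := by
      intro s' y h s a
      haveI := hR h s a
      refine Integrable.mono' (integrable_const C)
        (((ihc s').comp (continuous_const.add continuous_id)).aestronglyMeasurable) ?_
      filter_upwards with r
      rw [Real.norm_eq_abs, abs_le]
      exact ⟨by linarith [ih0 s' (y + r)], ihC s' (y + r)⟩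
    have hIle : ∀ (s' : S) (y : ℝ) (h : ℕ) (s : S) (a : A),
        (∫ r, Wrev P R H G n s' (y + r) ∂(R h s a)) ≤ C := by
      intro s' y h s a
      haveI := hR h s a
      calc (∫ r, Wrev P R H G n s' (y + r) ∂(R h s a))
          ≤ ∫ _, C ∂(R h s a) :=
            integral_mono (hint s' y h s a) (integrable_const C)
              (fun r => ihC s' (y + r))
        _ = C := by simp
    have hInn : ∀ (s' : S) (y : ℝ) (h : ℕ) (s : S) (a : A),
        0 ≤ (∫ r, Wrev P R H G n s' (y + r) ∂(R h s a)) := by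
      intro s' y h s a
      exact integral_nonneg (fun r => ih0 s' (y + r))
    have hIcont : ∀ (s' : S) (h : ℕ) (s : S) (a : A),
        Continuous (fun y => ∫ r, Wrev P R H G n s' (y + r) ∂(R h s a)) := by
      intro s' h s a
      haveI := hR h s a
      rw [continuous_iff_continuousAt]
      intro y₀
      apply continuousAt_of_dominated (bound := fun _ => C)
      · filter_upwards with y
        exact (((ihc s').comp (continuous_const.add continuous_id)).aestronglyMeasurable)
      · filter_upwards with y
        filter_upwards with r
        rw [Real.norm_eq_abs, abs_le]
        exact ⟨by linarith [ih0 s' (y + r)], ihC s' (y + r)⟩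
      · exact integrable_const C
      · filter_upwards with r
        exact (((ihc s').comp (continuous_id.add continuous_const)).continuousAt)
    refine ⟨?_, ?_, ?_⟩
    · intro s
      show Continuous (fun y => Finset.univ.sup' Finset.univ_nonempty
        (fun a : A => ∑ s' : S, P (H - n) s a s' *
          ∫ r, Wrev P R H G n s' (y + r) ∂(R (H - n) s a)))
      apply Continuous.finset_sup'_apply Finset.univ_nonempty
      intro a _
      exact continuous_finset_sum _ (fun s' _ =>
        continuous_const.mul (hIcont s' (H - n) s a))
    · intro s y
      show 0 ≤ Finset.univ.sup' Finset.univ_nonempty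
        (fun a : A => ∑ s' : S, P (H - n) s a s' *
          ∫ r, Wrev P R H G n s' (y + r) ∂(R (H - n) s a))
      obtain ⟨a⟩ := (inferInstance : Nonempty A)
      refine le_trans ?_ (Finset.le_sup' _ (Finset.mem_univ a))
      exact Finset.sum_nonneg fun s' _ =>
        mul_nonneg (hPnn _ _ _ _) (hInn s' y _ s a)
    · intro s y
      show Finset.univ.sup' Finset.univ_nonempty
        (fun a : A => ∑ s' : S, P (H - n) s a s' *
          ∫ r, Wrev P R H G n s' (y + r) ∂(R (H - n) s a)) ≤ C
      apply Finset.sup'_le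
      intro a _
      calc (∑ s' : S, P (H - n) s a s' *
            ∫ r, Wrev P R H G n s' (y + r) ∂(R (H - n) s a))
          ≤ ∑ s' : S, P (H - n) s a s' * C :=
            Finset.sum_le_sum fun s' _ =>
              mul_le_mul_of_nonneg_left (hIle s' y _ s a) (hPnn _ _ _ _)
        _ = C := by rw [← Finset.sum_mul, hPsum, one_mul]

theorem bellman_optimality_markovian_equivalence
    {S A : Type*} [Fintype S] [Fintype A] [Nonempty S] [Nonempty A]
    (H : ℕ) (hH : 1 ≤ H)
    (P : ℕ → S → A → S → ℝ)
    (hPnn : ∀ h s a s', 0 ≤ P h s a s') (hPsum : ∀ h s a, ∑ s' : S, P h s a s' = 1)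
    (R : ℕ → S → A → Measure ℝ) (hR : ∀ h s a, IsProbabilityMeasure (R h s a))
    (hsupp : ∀ h s a, (R h s a) (Set.Icc (0:ℝ) 1)ᶜ = 0)
    (U : ℝ → ℝ)
    (hUcont : ContinuousOn U (Set.Icc 0 (H : ℝ)))
    (hUmono : StrictMonoOn U (Set.Icc 0 (H : ℝ)))
    (hU0 : U 0 = 0)
    (V : ℕ → S → ℝ → ℝ)
    (hVbd : ∀ s y, V (H + 1) s y = U y)
    (hVrec : ∀ h, 1 ≤ h → h ≤ H → ∀ s y,
      V h s y = Finset.univ.sup' Finset.univ_nonempty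
        (fun a => ∑ s' : S, P h s a s' * ∫ r, V (h + 1) s' (y + r) ∂(R h s a))) :
    ∀ s : S,
      IsGreatest (Set.range (fun ψ : List (S × A × ℝ) → S → A => histValue P R U ψ H [] s))
        (V 1 s 0) := by
  classical
  set G : ℝ → ℝ := clampU U H with hGdef
  have hHR : (0 : ℝ) ≤ (H : ℝ) := Nat.cast_nonneg H
  have hUm : MonotoneOn U (Set.Icc 0 (H : ℝ)) := hUmono.monotoneOn
  have hclamp_mem : ∀ y : ℝ, max 0 (min y (H : ℝ)) ∈ Set.Icc (0 : ℝ) (H : ℝ) := by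
    intro y
    constructor
    · exact le_max_left _ _
    · exact max_le hHR (min_le_right _ _)
  have hGeq : ∀ y : ℝ, y ∈ Set.Icc (0 : ℝ) (H : ℝ) → G y = U y := by
    intro y hy
    have : max 0 (min y (H : ℝ)) = y := by
      rw [min_eq_left hy.2, max_eq_right hy.1]
    simp only [hGdef, clampU, this]
  have hGcont : Continuous G := by
    apply hUcont.comp_continuous
    · exact continuous_const.max (continuous_id.min continuous_const)
    · exact hclamp_mem
  have hG0 : ∀ y : ℝ, 0 ≤ G y := by
    intro y
    have h0 : (0 : ℝ) ∈ Set.Icc (0 : ℝ) (H : ℝ) := ⟨le_refl _, hHR⟩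
    have := hUm h0 (hclamp_mem y) (le_max_left _ _)
    simpa [hGdef, clampU, hU0] using this
  have hGC : ∀ y : ℝ, G y ≤ U (H : ℝ) := by
    intro y
    have hH' : (H : ℝ) ∈ Set.Icc (0 : ℝ) (H : ℝ) := ⟨hHR, le_refl _⟩
    exact hUm (hclamp_mem y) hH' (max_le hHR (min_le_right _ _))
  have hprop := Wrev_prop P hPnn hPsum R hR H G (U (H : ℝ)) hGcont hG0 hGC
  have hWcont : ∀ n (s : S), Continuous (fun y => Wrev P R H G n s y) :=
    fun n => (hprop n).1
  have hW0 : ∀ n (s : S) (y : ℝ), 0 ≤ Wrev P R H G n s y :=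
    fun n => (hprop n).2.1
  have hWC : ∀ n (s : S) (y : ℝ), Wrev P R H G n s y ≤ U (H : ℝ) :=
    fun n => (hprop n).2.2
  -- almost-everywhere membership in [0,1]
  have hae : ∀ h s a, ∀ᵐ r ∂(R h s a), r ∈ Set.Icc (0 : ℝ) 1 := by
    intro h s a
    rw [ae_iff]
    have : {r : ℝ | ¬ r ∈ Set.Icc (0 : ℝ) 1} = (Set.Icc (0 : ℝ) 1)ᶜ := rfl
    rw [this]
    exact hsupp h s a
  -- integrability of shifted Wrev
  have hWint : ∀ (n : ℕ) (s' : S) (y : ℝ) (h : ℕ) (s : S) (a : A),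
      Integrable (fun r => Wrev P R H G n s' (y + r)) (R h s a) := by
    intro n s' y h s a
    haveI := hR h s a
    refine Integrable.mono' (integrable_const (U (H : ℝ)))
      (((hWcont n s').comp (continuous_const.add continuous_id)).aestronglyMeasurable) ?_
    filter_upwards with r
    rw [Real.norm_eq_abs, abs_le]
    exact ⟨by linarith [hW0 n s' (y + r), le_trans (hG0 0) (hGC 0)], hWC n s' (y + r)⟩
  -- Step 1 : V agrees with Wrev on the relevant domain
  have keyV : ∀ n : ℕ, n ≤ H → ∀ (s : S) (y : ℝ),
      0 ≤ y → y ≤ (H : ℝ) - n → V (H + 1 - n) s y = Wrev P R H G n s y := by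
    intro n
    induction n with
    | zero =>
      intro _ s y hy0 hyH
      have h1 : H + 1 - 0 = H + 1 := rfl
      rw [h1, hVbd]
      rw [show Wrev P R H G 0 s y = G y from rfl]
      exact (hGeq y ⟨hy0, by simpa using hyH⟩).symm
    | succ n ih =>
      intro hn s y hy0 hyH
      have hnH : n ≤ H := Nat.le_of_succ_le hn
      have hidx : H + 1 - (n + 1) = H - n := by omega
      have h1 : 1 ≤ H - n := by omega
      have h2 : H - n ≤ H := Nat.sub_le H n
      have h3 : H - n + 1 = H + 1 - n := by omega
      rw [hidx, hVrec (H - n) h1 h2 s y]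
      rw [show Wrev P R H G (n + 1) s y = Finset.univ.sup' Finset.univ_nonempty
        (fun a : A => ∑ s' : S, P (H - n) s a s' *
          ∫ r, Wrev P R H G n s' (y + r) ∂(R (H - n) s a)) from rfl]
      apply Finset.sup'_congr _ rfl
      intro a _
      apply Finset.sum_congr rfl
      intro s' _
      congr 1
      rw [h3]
      apply integral_congr_ae
      filter_upwards [hae (H - n) s a] with r hr
      apply ih hnH s' (y + r) (by linarith [hr.1])
      have hcast : ((n : ℝ) + 1) = ((n + 1 : ℕ) : ℝ) := by push_cast; ring
      have : y + r ≤ (H : ℝ) - (n + 1 : ℕ) + 1 := by linarith [hr.2]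
      linarith [hr.2, hyH]
  -- Step 2 : every policy's value is at most Wrev
  have keyLe : ∀ (ψ : List (S × A × ℝ) → S → A) (n : ℕ) (g : List (S × A × ℝ)) (s : S),
      g.length + n = H → (∀ t ∈ g, t.2.2 ∈ Set.Icc (0 : ℝ) 1) →
      histValue P R U ψ n g s ≤ Wrev P R H G n s ((g.map (fun t => t.2.2)).sum) := by
    intro ψ n
    induction n with
    | zero =>
      intro g s hlen hg
      set y := (g.map (fun t => t.2.2)).sum with hy
      have hy0 : 0 ≤ y := List.sum_nonneg (by
        intro x hx
        obtain ⟨t, ht, rfl⟩ := List.mem_map.mp hx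
        exact (hg t ht).1)
      have hyH : y ≤ (H : ℝ) := by
        have := List.sum_le_card_nsmul (g.map (fun t => t.2.2)) 1 (by
          intro x hx
          obtain ⟨t, ht, rfl⟩ := List.mem_map.mp hx
          exact (hg t ht).2)
        simpa [hy, List.length_map, ← hlen] using this
      show U y ≤ Wrev P R H G 0 s y
      rw [show Wrev P R H G 0 s y = G y from rfl, hGeq y ⟨hy0, hyH⟩]
    | succ n ih =>
      intro g s hlen hg
      set a := ψ g s with ha
      set y := (g.map (fun t => t.2.2)).sum with hy
      have hlg : g.length + 1 = H - n := by omega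
      show (∑ s' : S, P (g.length + 1) s a s' *
          ∫ r, histValue P R U ψ n (g ++ [(s, a, r)]) s' ∂(R (g.length + 1) s a))
        ≤ Wrev P R H G (n + 1) s y
      rw [show Wrev P R H G (n + 1) s y = Finset.univ.sup' Finset.univ_nonempty
        (fun a : A => ∑ s' : S, P (H - n) s a s' *
          ∫ r, Wrev P R H G n s' (y + r) ∂(R (H - n) s a)) from rfl]
      refine le_trans ?_ (Finset.le_sup' _ (Finset.mem_univ a))
      rw [hlg]
      apply Finset.sum_le_sum
      intro s' _
      apply mul_le_mul_of_nonneg_left _ (hPnn _ _ _ _)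
      -- compare the integrals
      have haemono : ∀ᵐ r ∂(R (H - n) s a),
          histValue P R U ψ n (g ++ [(s, a, r)]) s' ≤ Wrev P R H G n s' (y + r) := by
        filter_upwards [hae (H - n) s a] with r hr
        have h1 : (g ++ [(s, a, r)]).length + n = H := by
          simp [List.length_append]; omega
        have h2 : ∀ t ∈ g ++ [(s, a, r)], t.2.2 ∈ Set.Icc (0 : ℝ) 1 := by
          intro t ht
          rcases List.mem_append.mp ht with h | h
          · exact hg t h
          · simp at h; subst h; exact hr
        have h3 : ((g ++ [(s, a, r)]).map (fun t => t.2.2)).sum = y + r := by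
          simp [hy]
        have := ih (g ++ [(s, a, r)]) s' h1 h2
        rwa [h3] at this
      by_cases hI : Integrable
          (fun r => histValue P R U ψ n (g ++ [(s, a, r)]) s') (R (H - n) s a)
      · exact integral_mono_ae hI (hWint n s' y (H - n) s a) haemono
      · rw [integral_undef hI]
        exact integral_nonneg (fun r => hW0 n s' (y + r))
  -- Step 3 : the greedy policy attains Wrev
  have keyEq : ∀ (n : ℕ) (g : List (S × A × ℝ)) (s : S),
      g.length + n = H → (∀ t ∈ g, t.2.2 ∈ Set.Icc (0 : ℝ) 1) →
      histValue P R U (greedy P R H G) n g s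
        = Wrev P R H G n s ((g.map (fun t => t.2.2)).sum) := by
    intro n
    induction n with
    | zero =>
      intro g s hlen hg
      set y := (g.map (fun t => t.2.2)).sum with hy
      have hy0 : 0 ≤ y := List.sum_nonneg (by
        intro x hx
        obtain ⟨t, ht, rfl⟩ := List.mem_map.mp hx
        exact (hg t ht).1)
      have hyH : y ≤ (H : ℝ) := by
        have := List.sum_le_card_nsmul (g.map (fun t => t.2.2)) 1 (by
          intro x hx
          obtain ⟨t, ht, rfl⟩ := List.mem_map.mp hx
          exact (hg t ht).2)
        simpa [hy, List.length_map, ← hlen] using this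
      show U y = Wrev P R H G 0 s y
      rw [show Wrev P R H G 0 s y = G y from rfl, hGeq y ⟨hy0, hyH⟩]
    | succ n ih =>
      intro g s hlen hg
      set a := greedy P R H G g s with ha
      set y := (g.map (fun t => t.2.2)).sum with hy
      have hlg : g.length + 1 = H - n := by omega
      have hlg2 : H - (g.length + 1) = n := by omega
      show (∑ s' : S, P (g.length + 1) s a s' *
          ∫ r, histValue P R U (greedy P R H G) n (g ++ [(s, a, r)]) s'
            ∂(R (g.length + 1) s a))
        = Wrev P R H G (n + 1) s y
      have hint_eq : ∀ s' : S,
          (∫ r, histValue P R U (greedy P R H G) n (g ++ [(s, a, r)]) s'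
            ∂(R (g.length + 1) s a))
          = ∫ r, Wrev P R H G n s' (y + r) ∂(R (g.length + 1) s a) := by
        intro s'
        apply integral_congr_ae
        filter_upwards [hae (g.length + 1) s a] with r hr
        have h1 : (g ++ [(s, a, r)]).length + n = H := by
          simp [List.length_append]; omega
        have h2 : ∀ t ∈ g ++ [(s, a, r)], t.2.2 ∈ Set.Icc (0 : ℝ) 1 := by
          intro t ht
          rcases List.mem_append.mp ht with h | h
          · exact hg t h
          · simp at h; subst h; exact hr
        have h3 : ((g ++ [(s, a, r)]).map (fun t => t.2.2)).sum = y + r := by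
          simp [hy]
        have := ih (g ++ [(s, a, r)]) s' h1 h2
        rwa [h3] at this
      calc (∑ s' : S, P (g.length + 1) s a s' *
            ∫ r, histValue P R U (greedy P R H G) n (g ++ [(s, a, r)]) s'
              ∂(R (g.length + 1) s a))
          = ∑ s' : S, P (g.length + 1) s a s' *
              ∫ r, Wrev P R H G n s' (y + r) ∂(R (g.length + 1) s a) := by
            exact Finset.sum_congr rfl (fun s' _ => by rw [hint_eq s'])
        _ = Qfun P R H G g s a := by
            unfold Qfun
            rw [hlg2, ← hy]
        _ = Finset.univ.sup' Finset.univ_nonempty (Qfun P R H G g s) :=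
            (greedy_spec P R H G g s).symm
        _ = Wrev P R H G (n + 1) s y := by
            rw [show Wrev P R H G (n + 1) s y = Finset.univ.sup' Finset.univ_nonempty
              (fun a : A => ∑ s' : S, P (H - n) s a s' *
                ∫ r, Wrev P R H G n s' (y + r) ∂(R (H - n) s a)) from rfl]
            apply Finset.sup'_congr _ rfl
            intro b _
            unfold Qfun
            rw [hlg2, ← hy, hlg]
  -- conclude
  intro s
  have hV1 : V 1 s 0 = Wrev P R H G H s 0 := by
    have := keyV H (le_refl H) s 0 (le_refl 0) (by simp)
    simpa using this
  constructor
  · refine ⟨greedy P R H G, ?_⟩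
    have := keyEq H ([] : List (S × A × ℝ)) s (by simp) (by simp)
    simpa [hV1] using this
  · rintro x ⟨ψ, rfl⟩
    have := keyLe ψ H ([] : List (S × A × ℝ)) s (by simp) (by simp)
    simpa [hV1] using this
end
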